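/- Let s ≥ 1 and let Q be an m×n binary matrix with property P_s. Let C be an m×t binary matrix such that E := C·Cᵀ − 2^s·I_m is a binary matrix (equivalently, every row of C has Hamming weight 2^s and any two distinct rows of C have supports intersecting in at most one position). Then the block matrix Q' = [[Q, C, E], [0, I_t, Cᵀ]] of size (m+t) × (n+t+m) has property P_{s+1}. -/

import Mathlib

/-- If `Q` is an `m×n` binary matrix with property `P_s` (every nonzero
`{-1,0,1}`-valued vector `z` gives `Qz` with an entry not divisible by `2^s`), and `C` is
an `m×t` binary matrix such that `E := C·Cᵀ − 2^s·I_m` is binary, then the block matrix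
`Q' = [[Q, C, E], [0, I_t, Cᵀ]]` has property `P_{s+1}`. -/
theorem stmt7 (s m n t : ℕ) (hs : 1 ≤ s)
    (Q : Matrix (Fin m) (Fin n) ℤ)
    (hQbin : ∀ i j, Q i j = 0 ∨ Q i j = 1)
    (hPs : ∀ z : Fin n → ℤ, (∀ j, z j = -1 ∨ z j = 0 ∨ z j = 1) → z ≠ 0 →
      ∃ i, ¬ ((2 ^ s : ℤ) ∣ Q.mulVec z i))
    (C : Matrix (Fin m) (Fin t) ℤ)
    (hCbin : ∀ i j, C i j = 0 ∨ C i j = 1)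
    (E : Matrix (Fin m) (Fin m) ℤ)
    (hE : E = C * C.transpose - 2 ^ s)
    (hEbin : ∀ i j, E i j = 0 ∨ E i j = 1)
    (Q' : Matrix (Fin m ⊕ Fin t) (Fin n ⊕ (Fin t ⊕ Fin m)) ℤ)
    (hQ' : Q' = Matrix.fromBlocks Q (Matrix.fromCols C E) 0
      (Matrix.fromCols 1 C.transpose)) :
    ∀ z : Fin n ⊕ (Fin t ⊕ Fin m) → ℤ, (∀ j, z j = -1 ∨ z j = 0 ∨ z j = 1) → z ≠ 0 →
      ∃ i, ¬ ((2 ^ (s + 1) : ℤ) ∣ Q'.mulVec z i) := by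
  intro z hzval hz0
  by_contra hcon
  push_neg at hcon
  set x : Fin n → ℤ := fun j => z (Sum.inl j) with hxdef
  set y : Fin t → ℤ := fun j => z (Sum.inr (Sum.inl j)) with hydef
  set w : Fin m → ℤ := fun i => z (Sum.inr (Sum.inr i)) with hwdef
  have hz : z = Sum.elim x (Sum.elim y w) := by
    funext j; rcases j with j | (j | j) <;> rfl
  have hmv : Q'.mulVec z = Sum.elim (Q.mulVec x + (C.mulVec y + E.mulVec w))
      ((0 : Fin t → ℤ) + (y + C.transpose.mulVec w)) := by
    rw [hQ', hz, Matrix.fromBlocks_mulVec, Sum.elim_comp_inl, Sum.elim_comp_inr,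
      Matrix.fromCols_mulVec_sumElim, Matrix.fromCols_mulVec_sumElim,
      Matrix.zero_mulVec, Matrix.one_mulVec]
  have hbot : ∀ j, (2 : ℤ) ^ (s + 1) ∣ y j + (C.transpose.mulVec w) j := by
    intro j
    have h := hcon (Sum.inr j)
    rw [hmv] at h
    simpa using h
  -- E *ᵥ w = C *ᵥ (Cᵀ *ᵥ w) - 2^s • w
  have hEw : E.mulVec w = C.mulVec (C.transpose.mulVec w) - ((2:ℤ)^s) • w := by
    have h2 : ((2 : Matrix (Fin m) (Fin m) ℤ)) ^ s = ((2:ℤ)^s) • 1 := by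
      rw [show (2 : Matrix (Fin m) (Fin m) ℤ) = (2:ℤ) • 1 by simp, smul_pow, one_pow]
    rw [hE, Matrix.sub_mulVec, Matrix.mulVec_mulVec, h2, Matrix.smul_mulVec,
      Matrix.one_mulVec]
  have htop : ∀ i, (2 : ℤ) ^ (s + 1) ∣
      Q.mulVec x i + (C.mulVec (y + C.transpose.mulVec w)) i - 2 ^ s * w i := by
    intro i
    have h := hcon (Sum.inl i)
    rw [hmv] at h
    simp only [Sum.elim_inl, Pi.add_apply] at h
    have hEwi := congrFun hEw i
    simp only [Pi.sub_apply, Pi.smul_apply, smul_eq_mul] at hEwi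
    have : Q.mulVec x i + (C.mulVec (y + C.transpose.mulVec w)) i - 2 ^ s * w i
        = Q.mulVec x i + (C.mulVec y i + E.mulVec w i) := by
      rw [Matrix.mulVec_add, hEwi]; simp; ring
    rw [this]
    exact h
  have hCv : ∀ i, (2 : ℤ) ^ (s + 1) ∣ (C.mulVec (y + C.transpose.mulVec w)) i := by
    intro i
    simp only [Matrix.mulVec, dotProduct]
    exact Finset.dvd_sum fun j _ => Dvd.dvd.mul_left (hbot j) _
  have h1 : ∀ i, (2 : ℤ) ^ (s + 1) ∣ Q.mulVec x i - 2 ^ s * w i := by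
    intro i
    have h : (2 : ℤ) ^ (s + 1) ∣ _ := dvd_sub (htop i) (hCv i)
    convert h using 1
    ring
  have hQx : ∀ i, (2 : ℤ) ^ s ∣ Q.mulVec x i := by
    intro i
    have h2 : (2:ℤ)^s ∣ (2:ℤ)^(s+1) := pow_dvd_pow 2 (Nat.le_succ s)
    have h3 : (2:ℤ)^s ∣ Q.mulVec x i - 2 ^ s * w i := h2.trans (h1 i)
    have := dvd_add h3 (Dvd.intro (w i) rfl)
    simpa using this
  have hx : x = 0 := by
    by_contra hx
    obtain ⟨i, hi⟩ := hPs x (fun j => hzval (Sum.inl j)) hx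
    exact hi (hQx i)
  have hw : ∀ i, w i = 0 := by
    intro i
    have h := h1 i
    rw [hx, Matrix.mulVec_zero] at h
    simp only [Pi.zero_apply, zero_sub, dvd_neg] at h
    rw [pow_succ] at h
    have h2 : (2:ℤ) ∣ w i := by
      have := (mul_dvd_mul_iff_left (pow_ne_zero s (two_ne_zero (α := ℤ)))).mp h
      exact this
    rcases hzval (Sum.inr (Sum.inr i)) with hv | hv | hv <;>
      [skip; skip; skip] <;>
      · have hv2 : w i = _ := hv
        omega
  have hwv : w = 0 := funext hw
  have hy : ∀ j, y j = 0 := by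
    intro j
    have h := hbot j
    rw [hwv, Matrix.mulVec_zero] at h
    simp only [Pi.zero_apply, add_zero] at h
    have hge : (2:ℤ) ≤ 2 ^ (s+1) := le_self_pow₀ one_le_two (Nat.succ_ne_zero s)
    rcases hzval (Sum.inr (Sum.inl j)) with hv | hv | hv
    · have hv2 : y j = -1 := hv
      rw [hv2, dvd_neg] at h
      have := Int.le_of_dvd one_pos h
      linarith
    · exact hv
    · have hv2 : y j = 1 := hv
      rw [hv2] at h
      have := Int.le_of_dvd one_pos h
      linarith
  apply hz0
  funext j
  rcases j with j | (j | j)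
  · exact congrFun hx j
  · exact hy j
  · exact hw j
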